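/- Inner Pasch holds in the plane over any linearly ordered field: let F be a linearly ordered field and consider the plane F × F as an F-module. For all points a, p, c, b, q in F × F, if p lies strictly between a and c, q lies strictly between b and c, p ≠ b, and q ≠ a, then there exists a point z in F × F such that z lies strictly between a and q and z lies strictly between b and p. -/

import Mathlib

/-- Inner Pasch holds in the plane over any linearly ordered field. -/
theorem inner_pasch_plane (F : Type*) [Field F] [LinearOrder F] [IsStrictOrderedRing F]
    (a p c b q : F × F)
    (h1 : Sbtw F a p c) (h2 : Sbtw F b q c)
    (h3 : p ≠ b) (h4 : q ≠ a) :
    ∃ z : F × F, Sbtw F a z q ∧ Sbtw F b z p := by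
  obtain ⟨t, ht, rfl⟩ := h1.wbtw
  obtain ⟨s, hs, rfl⟩ := h2.wbtw
  rw [sbtw_lineMap_iff] at h1 h2
  obtain ⟨hac, ht0, ht1⟩ := h1
  obtain ⟨hbc, hs0, hs1⟩ := h2
  have hD : 0 < t + s - t * s := by nlinarith
  refine ⟨AffineMap.lineMap a (AffineMap.lineMap b c s) (t / (t + s - t * s)), ?_, ?_⟩
  · rw [sbtw_lineMap_iff]
    refine ⟨h4.symm, div_pos ht0 hD, ?_⟩
    rw [div_lt_one hD]; nlinarith
  · have hz : AffineMap.lineMap a (AffineMap.lineMap b c s) (t / (t + s - t * s))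
        = AffineMap.lineMap b (AffineMap.lineMap a c t) (s / (t + s - t * s)) := by
      simp only [AffineMap.lineMap_apply_module]
      match_scalars <;> field_simp <;> ring
    rw [hz, sbtw_lineMap_iff]
    refine ⟨h3.symm, div_pos hs0 hD, ?_⟩
    rw [div_lt_one hD]; nlinarith
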